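/- Suppose that θ = (θ₁, …, θₙ) and φ = (φ₁, …, φ_{n'}) are two tuples of angles, each angle strictly between 0 and π, realised with multiplicity by sets of m and m' points in the plane respectively, where m, m' ≥ 2. Then the concatenation of the two tuples can be realised with multiplicity by a set of m + m' − 2 points in the plane. -/

import Mathlib

open EuclideanGeometry

/-- A set `P` of points realises the angle `θ` if some three points of `P`
form this angle. -/
def Realises {d : ℕ} (P : Set (EuclideanSpace ℝ (Fin d))) (θ : ℝ) : Prop :=
  ∃ A B C : EuclideanSpace ℝ (Fin d),
    A ∈ P ∧ B ∈ P ∧ C ∈ P ∧ A ≠ B ∧ C ≠ B ∧ EuclideanGeometry.angle A B C = θ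

/-- The ray from `B` towards `A`, encoded by its vertex together with the
unit vector in its direction. -/
noncomputable def rayOf {d : ℕ} (B A : EuclideanSpace ℝ (Fin d)) :
    EuclideanSpace ℝ (Fin d) × EuclideanSpace ℝ (Fin d) :=
  (B, ‖A - B‖⁻¹ • (A - B))

/-- A tuple `θ` of angles is realised with multiplicity by `P` if each `θ i` is
realised at some vertex `B i` by points `A i, C i` of `P`, with the unordered
pairs of rays pairwise distinct. -/
def RealisesMult {d n : ℕ} (P : Set (EuclideanSpace ℝ (Fin d))) (θ : Fin n → ℝ) : Prop :=
  ∃ A B C : Fin n → EuclideanSpace ℝ (Fin d),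
    (∀ i, A i ∈ P ∧ B i ∈ P ∧ C i ∈ P ∧ A i ≠ B i ∧ C i ≠ B i ∧
      EuclideanGeometry.angle (A i) (B i) (C i) = θ i) ∧
    Function.Injective fun i =>
      ({rayOf (B i) (A i), rayOf (B i) (C i)} :
        Set (EuclideanSpace ℝ (Fin d) × EuclideanSpace ℝ (Fin d)))

namespace Statement6Aux

open RealInnerProductSpace

noncomputable section

local notation "E" => EuclideanSpace ℝ (Fin 2)

/-- Rotation of the plane by a quarter turn. -/
def rot (x : E) : E := !₂[-x 1, x 0]

@[simp] lemma rot0 (x : E) : rot x 0 = -x 1 := rfl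
@[simp] lemma rot1 (x : E) : rot x 1 = x 0 := rfl

lemma inner2 (x y : E) : ⟪x, y⟫ = x 0 * y 0 + x 1 * y 1 := by
  simp [PiLp.inner_apply, Fin.sum_univ_two, RCLike.inner_apply, conj_trivial]; ring

lemma ext2 {x y : E} (h0 : x 0 = y 0) (h1 : x 1 = y 1) : x = y := by
  ext i; fin_cases i <;> assumption

@[simp] lemma smul_apply (c : ℝ) (x : E) (i : Fin 2) : (c • x) i = c * x i := rfl

lemma inner_rot_self (x : E) : ⟪x, rot x⟫ = 0 := by
  rw [inner2, rot0, rot1]; ring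

lemma inner_rot_rot (x y : E) : ⟪rot x, rot y⟫ = ⟪x, y⟫ := by
  rw [inner2, inner2]
  show (-x 1) * (-y 1) + x 0 * y 0 = _
  ring

/-- If `a` is orthogonal to `rot v` then `a` is a multiple of `v`. -/
lemma ortho_rot {v a : E} (hv : v ≠ 0) (h : ⟪a, rot v⟫ = 0) : ∃ s : ℝ, a = s • v := by
  rw [inner2, rot0, rot1] at h
  have hv' : v 0 ≠ 0 ∨ v 1 ≠ 0 := by
    by_contra hc
    push_neg at hc
    exact hv (ext2 hc.1 hc.2)
  rcases hv' with h0 | h1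
  · refine ⟨a 0 / v 0, ext2 ?_ ?_⟩ <;> simp only [smul_apply]
    · field_simp
    · field_simp; nlinarith [h]
  · refine ⟨a 1 / v 1, ext2 ?_ ?_⟩ <;> simp only [smul_apply]
    · field_simp; nlinarith [h]
    · field_simp

/-- If `w` is orthogonal to `v ≠ 0` then `w` is a multiple of `rot v`. -/
lemma ortho_rot' {v w : E} (hv : v ≠ 0) (h : ⟪v, w⟫ = 0) : ∃ t : ℝ, w = t • rot v := by
  rw [inner2] at h
  have hv' : v 0 ≠ 0 ∨ v 1 ≠ 0 := by
    by_contra hc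
    push_neg at hc
    exact hv (ext2 hc.1 hc.2)
  rcases hv' with h0 | h1
  · refine ⟨w 1 / v 0, ext2 ?_ ?_⟩ <;> simp only [smul_apply, rot0, rot1]
    · field_simp; nlinarith [h]
    · field_simp
  · refine ⟨-(w 0 / v 1), ext2 ?_ ?_⟩ <;> simp only [smul_apply, rot0, rot1]
    · field_simp
    · field_simp; nlinarith [h]

/-- The orientation-reversing similarity linear map sending `u` to `v`. -/
def fmap (u v x : E) : E :=
  (⟪x, u⟫ / ⟪u, u⟫) • v - (⟪x, rot u⟫ / ⟪u, u⟫) • rot v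

lemma fmap_sub (u v x y : E) : fmap u v (x - y) = fmap u v x - fmap u v y := by
  simp only [fmap, inner_sub_left, sub_div, sub_smul]
  abel

lemma fmap_smul (u v : E) (c : ℝ) (x : E) : fmap u v (c • x) = c • fmap u v x := by
  simp only [fmap, real_inner_smul_left, mul_div_assoc, mul_smul, smul_sub]

lemma fmap_zero (u v : E) : fmap u v 0 = 0 := by
  simp [fmap]

lemma fmap_u {u : E} (v : E) (hu : u ≠ 0) : fmap u v u = v := by
  have hU : ⟪u, u⟫ ≠ 0 := inner_self_ne_zero.mpr hu
  rw [fmap, inner_rot_self, div_self hU, zero_div, one_smul, zero_smul, sub_zero]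

lemma inner_fmap {u : E} (v : E) (hu : u ≠ 0) (x y : E) :
    ⟪fmap u v x, fmap u v y⟫ = (⟪v, v⟫ / ⟪u, u⟫) * ⟪x, y⟫ := by
  have hU : ⟪u, u⟫ ≠ 0 := inner_self_ne_zero.mpr hu
  have hU' : u 0 * u 0 + u 1 * u 1 ≠ 0 := by rw [← inner2]; exact hU
  simp only [fmap, inner2, rot0, rot1]
  show ((x 0 * u 0 + x 1 * u 1) / _ * v 0 - (x 0 * -u 1 + x 1 * u 0) / _ * -v 1) *
      ((y 0 * u 0 + y 1 * u 1) / _ * v 0 - (y 0 * -u 1 + y 1 * u 0) / _ * -v 1) +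
      ((x 0 * u 0 + x 1 * u 1) / _ * v 1 - (x 0 * -u 1 + x 1 * u 0) / _ * v 0) *
      ((y 0 * u 0 + y 1 * u 1) / _ * v 1 - (y 0 * -u 1 + y 1 * u 0) / _ * v 0) = _
  have hU'' : u 0 ^ 2 + u 1 ^ 2 ≠ 0 := by rw [sq, sq]; exact hU'
  field_simp
  ring

lemma inner_fmap_rot {u : E} (v : E) (hu : u ≠ 0) (x : E) :
    ⟪fmap u v x, rot v⟫ = -((⟪v, v⟫ / ⟪u, u⟫) * ⟪x, rot u⟫) := by
  have h1 : ⟪v, rot v⟫ = 0 := inner_rot_self v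
  have h3 : ⟪rot v, rot v⟫ = ⟪v, v⟫ := inner_rot_rot v v
  simp only [fmap, inner_sub_left, real_inner_smul_left, h1, h3, mul_zero, zero_sub]
  ring

lemma norm_fmap {u v : E} (hu : u ≠ 0) (hv : v ≠ 0) (x : E) :
    ‖fmap u v x‖ = (‖v‖ / ‖u‖) * ‖x‖ := by
  have hU : ‖u‖ ≠ 0 := norm_ne_zero_iff.mpr hu
  refine (mul_self_inj (norm_nonneg _) (by positivity)).mp ?_
  rw [← real_inner_self_eq_norm_mul_norm, inner_fmap v hu,
    real_inner_self_eq_norm_mul_norm, real_inner_self_eq_norm_mul_norm,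
    real_inner_self_eq_norm_mul_norm]
  field_simp

lemma fmap_injective {u v : E} (hu : u ≠ 0) (hv : v ≠ 0) :
    Function.Injective (fmap u v) := by
  intro x y h
  have h0 : fmap u v (x - y) = 0 := by rw [fmap_sub, h, sub_self]
  have h1 := norm_fmap hu hv (x - y)
  rw [h0, norm_zero] at h1
  have hU : ‖u‖ ≠ 0 := norm_ne_zero_iff.mpr hu
  have hV : ‖v‖ ≠ 0 := norm_ne_zero_iff.mpr hv
  have h2 : ‖x - y‖ = 0 := by
    rcases mul_eq_zero.mp h1.symm with h' | h'
    · exact absurd h' (by positivity)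
    · exact h'
  rw [norm_eq_zero, sub_eq_zero] at h2
  exact h2

lemma angle_fmap {u v : E} (hu : u ≠ 0) (hv : v ≠ 0) (x y : E) :
    InnerProductGeometry.angle (fmap u v x) (fmap u v y) = InnerProductGeometry.angle x y := by
  unfold InnerProductGeometry.angle
  rw [inner_fmap v hu, norm_fmap hu hv, norm_fmap hu hv]
  congr 1
  have hU : ‖u‖ ≠ 0 := norm_ne_zero_iff.mpr hu
  have hV : ‖v‖ ≠ 0 := norm_ne_zero_iff.mpr hv
  have hk : ⟪v, v⟫ / ⟪u, u⟫ = (‖v‖ / ‖u‖) * (‖v‖ / ‖u‖) := by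
    rw [real_inner_self_eq_norm_mul_norm, real_inner_self_eq_norm_mul_norm]
    field_simp
  rw [hk, show (‖v‖ / ‖u‖ * ‖x‖) * (‖v‖ / ‖u‖ * ‖y‖) =
    (‖v‖ / ‖u‖ * (‖v‖ / ‖u‖)) * (‖x‖ * ‖y‖) by ring]
  exact mul_div_mul_left _ _ (by positivity)

/-- First stage of the supporting-line lemma, with an abstract outward
functional `w`. -/
lemma support_aux (P : Finset E) (hP : 2 ≤ P.card) :
    ∃ p₁ ∈ P, ∃ p₂ ∈ P, p₁ ≠ p₂ ∧ ∃ w : E, w ≠ 0 ∧ ⟪p₂ - p₁, w⟫ = 0 ∧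
      ∀ p ∈ P, ⟪p - p₁, w⟫ ≤ 0 := by
  classical
  have hne : P.Nonempty := Finset.card_pos.mp (by omega)
  obtain ⟨p₁, hp₁, hmax⟩ := P.exists_max_image (fun p => p 0) hne
  by_cases hcase : ∃ p' ∈ P, p' ≠ p₁ ∧ p' 0 = p₁ 0
  · obtain ⟨p₂, hp₂, hne12, heq⟩ := hcase
    refine ⟨p₁, hp₁, p₂, hp₂, hne12.symm, !₂[1, 0], ?_, ?_, ?_⟩
    · intro h
      have h' : (!₂[1, 0] : E) 0 = 0 := by rw [h]; rfl
      norm_num at h'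
    · rw [inner2]
      show (p₂ 0 - p₁ 0) * 1 + (p₂ 1 - p₁ 1) * 0 = 0
      rw [heq]; ring
    · intro p hp
      rw [inner2]
      show (p 0 - p₁ 0) * 1 + (p 1 - p₁ 1) * 0 ≤ 0
      have := hmax p hp
      nlinarith
  · push_neg at hcase
    have hlt : ∀ p ∈ P, p ≠ p₁ → p 0 < p₁ 0 := by
      intro p hp hne'
      exact lt_of_le_of_ne (hmax p hp) (hcase p hp hne')
    have hePne : (P.erase p₁).Nonempty := by
      rw [← Finset.card_pos, Finset.card_erase_of_mem hp₁]; omega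
    obtain ⟨p₂, hp₂e, hmax2⟩ :=
      (P.erase p₁).exists_max_image (fun p => (p 1 - p₁ 1) / (p₁ 0 - p 0)) hePne
    have hp₂ : p₂ ∈ P := Finset.mem_of_mem_erase hp₂e
    have hne21 : p₂ ≠ p₁ := Finset.ne_of_mem_erase hp₂e
    have hd₂ : 0 < p₁ 0 - p₂ 0 := by have := hlt p₂ hp₂ hne21; linarith
    set c : ℝ := (p₂ 1 - p₁ 1) / (p₁ 0 - p₂ 0) with hc
    refine ⟨p₁, hp₁, p₂, hp₂, hne21.symm, !₂[c, 1], ?_, ?_, ?_⟩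
    · intro h
      have h' : (!₂[c, 1] : E) 1 = 0 := by rw [h]; rfl
      norm_num at h'
    · rw [inner2]
      show (p₂ 0 - p₁ 0) * c + (p₂ 1 - p₁ 1) * 1 = 0
      rw [hc]
      field_simp
      ring
    · intro p hp
      rw [inner2]
      show (p 0 - p₁ 0) * c + (p 1 - p₁ 1) * 1 ≤ 0
      by_cases hpp : p = p₁
      · rw [hpp]; ring_nf; rfl
      · have hd : 0 < p₁ 0 - p 0 := by have := hlt p hp hpp; linarith
        have hle : (p 1 - p₁ 1) / (p₁ 0 - p 0) ≤ c :=
          hmax2 p (Finset.mem_erase.mpr ⟨hpp, hp⟩)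
        rw [div_le_iff₀ hd] at hle
        nlinarith

/-- Supporting line of a planar finite set through two of its points,
with outward normal `rot (p₂ - p₁)`. -/
lemma support (P : Finset E) (hP : 2 ≤ P.card) :
    ∃ p₁ ∈ P, ∃ p₂ ∈ P, p₁ ≠ p₂ ∧ ∀ p ∈ P, ⟪p - p₁, rot (p₂ - p₁)⟫ ≤ 0 := by
  obtain ⟨p₁, hp₁, p₂, hp₂, hne12, w, hw0, hworth, hwle⟩ := support_aux P hP
  have hv : p₂ - p₁ ≠ 0 := sub_ne_zero.mpr (Ne.symm hne12)
  obtain ⟨t, rfl⟩ := ortho_rot' hv hworth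
  have ht : t ≠ 0 := by
    intro h; rw [h, zero_smul] at hw0; exact hw0 rfl
  rcases ht.lt_or_gt with htneg | htpos
  · -- t < 0 : use the pair (p₂, p₁)
    refine ⟨p₂, hp₂, p₁, hp₁, Ne.symm hne12, ?_⟩
    intro p hp
    have h1 : rot (p₁ - p₂) = -rot (p₂ - p₁) := by
      apply ext2
      · show -(p₁ 1 - p₂ 1) = -(-(p₂ 1 - p₁ 1)); ring
      · show p₁ 0 - p₂ 0 = -(p₂ 0 - p₁ 0); ring
    have h2 : p - p₂ = (p - p₁) - (p₂ - p₁) := by abel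
    have h3 := hwle p hp
    rw [real_inner_smul_right] at h3
    have h4 : ⟪p₂ - p₁, rot (p₂ - p₁)⟫ = 0 := inner_rot_self _
    rw [h1, inner_neg_right, h2, inner_sub_left, h4, sub_zero]
    nlinarith
  · -- 0 < t : use the pair (p₁, p₂)
    refine ⟨p₁, hp₁, p₂, hp₂, hne12, ?_⟩
    intro p hp
    have h3 := hwle p hp
    rw [real_inner_smul_right] at h3
    nlinarith

end

end Statement6Aux

section MainProof

open Statement6Aux RealInnerProductSpace

local notation "E" => EuclideanSpace ℝ (Fin 2)

set_option maxHeartbeats 1600000 in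
/-- if the tuples `θ` and `φ` of angles in `(0, π)` are realised
with multiplicity by `m` and `m'` points in the plane respectively
(`m, m' ≥ 2`), then their concatenation is realised with multiplicity by
`m + m' - 2` points in the plane. -/
theorem statement6 (n n' m m' : ℕ) (hm : 2 ≤ m) (hm' : 2 ≤ m')
    (θ : Fin n → ℝ) (φ : Fin n' → ℝ)
    (hθ : ∀ i, θ i ∈ Set.Ioo 0 Real.pi) (hφ : ∀ i, φ i ∈ Set.Ioo 0 Real.pi)
    (P : Finset (EuclideanSpace ℝ (Fin 2))) (hP : P.card = m)
    (hPθ : RealisesMult (P : Set (EuclideanSpace ℝ (Fin 2))) θ)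
    (Q : Finset (EuclideanSpace ℝ (Fin 2))) (hQ : Q.card = m')
    (hQφ : RealisesMult (Q : Set (EuclideanSpace ℝ (Fin 2))) φ) :
    ∃ R : Finset (EuclideanSpace ℝ (Fin 2)), R.card = m + m' - 2 ∧
      RealisesMult (R : Set (EuclideanSpace ℝ (Fin 2))) (Fin.append θ φ) := by
  classical
  haveI : Infinite E :=
    Infinite.of_injective (fun (r : ℝ) => (!₂[r, 0] : E))
      (by intro a b h; simpa using congrArg (fun x : E => x 0) h)
  obtain ⟨A, B, C, hABC, hinjθ⟩ := hPθ
  obtain ⟨A', B', C', hABC', hinjφ⟩ := hQφ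
  obtain ⟨p₁, hp₁, p₂, hp₂, hp12, hPside⟩ := support P (by rw [hP]; exact hm)
  obtain ⟨q₁, hq₁, q₂, hq₂, hq12, hQside⟩ := support Q (by rw [hQ]; exact hm')
  set u : E := q₂ - q₁ with hu_def
  set v : E := p₂ - p₁ with hv_def
  have hu : u ≠ 0 := sub_ne_zero.mpr (Ne.symm hq12)
  have hv : v ≠ 0 := sub_ne_zero.mpr (Ne.symm hp12)
  set g : E → E := fun x => p₁ + fmap u v (x - q₁) with hg_def
  have hgsub : ∀ x y : E, g x - g y = fmap u v (x - y) := by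
    intro x y
    show (p₁ + fmap u v (x - q₁)) - (p₁ + fmap u v (y - q₁)) = _
    rw [add_sub_add_left_eq_sub, ← fmap_sub]
    congr 1
    abel
  have hginj : Function.Injective g := by
    intro x y h
    have h0 : fmap u v (x - y) = fmap u v 0 := by
      rw [← hgsub, h, sub_self, fmap_zero]
    have h1 := fmap_injective hu hv h0
    exact sub_eq_zero.mp h1
  have hgq1 : g q₁ = p₁ := by
    show p₁ + fmap u v (q₁ - q₁) = p₁
    rw [sub_self, fmap_zero, add_zero]
  have hgq2 : g q₂ = p₂ := by
    show p₁ + fmap u v u = p₂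
    rw [fmap_u v hu]
    show p₁ + (p₂ - p₁) = p₂
    abel
  have hQside' : ∀ x ∈ Q, (0:ℝ) ≤ ⟪g x - p₁, rot v⟫ := by
    intro x hx
    have h1 : g x - p₁ = fmap u v (x - q₁) := by
      show (p₁ + fmap u v (x - q₁)) - p₁ = _
      abel
    rw [h1, inner_fmap_rot v hu]
    have h2 : ⟪x - q₁, rot u⟫ ≤ 0 := hQside x hx
    have hVp : (0:ℝ) < ⟪v, v⟫ := by
      rw [real_inner_self_eq_norm_mul_norm]
      exact mul_pos (norm_pos_iff.mpr hv) (norm_pos_iff.mpr hv)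
    have hUp : (0:ℝ) < ⟪u, u⟫ := by
      rw [real_inner_self_eq_norm_mul_norm]
      exact mul_pos (norm_pos_iff.mpr hu) (norm_pos_iff.mpr hu)
    have hk : (0:ℝ) < ⟪v, v⟫ / ⟪u, u⟫ := div_pos hVp hUp
    nlinarith
  set Qg : Finset E := Q.image g with hQg_def
  have hp1Qg : p₁ ∈ Qg := Finset.mem_image.mpr ⟨q₁, hq₁, hgq1⟩
  have hp2Qg : p₂ ∈ Qg := Finset.mem_image.mpr ⟨q₂, hq₂, hgq2⟩
  set R₀ : Finset E := P ∪ Qg with hR₀_def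
  have hcard0 : R₀.card ≤ m + m' - 2 := by
    have h1 : R₀.card + (P ∩ Qg).card = P.card + Qg.card :=
      Finset.card_union_add_card_inter P Qg
    have h2 : Qg.card = m' := by
      rw [hQg_def, Finset.card_image_of_injective _ hginj, hQ]
    have h3 : 2 ≤ (P ∩ Qg).card := by
      have hsub : ({p₁, p₂} : Finset E) ⊆ P ∩ Qg := by
        intro z hz
        rcases Finset.mem_insert.mp hz with rfl | hz'
        · exact Finset.mem_inter.mpr ⟨hp₁, hp1Qg⟩
        · rw [Finset.mem_singleton.mp hz']
          exact Finset.mem_inter.mpr ⟨hp₂, hp2Qg⟩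
      calc 2 = ({p₁, p₂} : Finset E).card := (Finset.card_pair hp12).symm
        _ ≤ _ := Finset.card_le_card hsub
    omega
  obtain ⟨R, hRsub, hRcard⟩ := Infinite.exists_superset_card_eq R₀ (m + m' - 2) hcard0
  have hmemP : ∀ x ∈ P, x ∈ (R : Set E) := fun x hx =>
    Finset.mem_coe.mpr (hRsub (Finset.mem_union_left _ hx))
  have hmemQ : ∀ x ∈ Q, g x ∈ (R : Set E) := fun x hx =>
    Finset.mem_coe.mpr (hRsub (Finset.mem_union_right _ (Finset.mem_image.mpr ⟨x, hx, rfl⟩)))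
  have hangg : ∀ X Y Z : E,
      EuclideanGeometry.angle (g X) (g Y) (g Z) = EuclideanGeometry.angle X Y Z := by
    intro X Y Z
    unfold EuclideanGeometry.angle
    rw [vsub_eq_sub, vsub_eq_sub, vsub_eq_sub, vsub_eq_sub, hgsub, hgsub, angle_fmap hu hv]
  refine ⟨R, hRcard, Fin.append A (g ∘ A'), Fin.append B (g ∘ B'), Fin.append C (g ∘ C'),
    ?_, ?_⟩
  · intro i
    induction i using Fin.addCases with
    | left a =>
      obtain ⟨hA, hB, hC, hAB, hCB, hang⟩ := hABC a
      simp only [Fin.append_left]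
      exact ⟨hmemP _ (Finset.mem_coe.mp hA), hmemP _ (Finset.mem_coe.mp hB),
        hmemP _ (Finset.mem_coe.mp hC), hAB, hCB, hang⟩
    | right b =>
      obtain ⟨hA, hB, hC, hAB, hCB, hang⟩ := hABC' b
      simp only [Fin.append_right, Function.comp_apply]
      exact ⟨hmemQ _ (Finset.mem_coe.mp hA), hmemQ _ (Finset.mem_coe.mp hB),
        hmemQ _ (Finset.mem_coe.mp hC), fun h => hAB (hginj h), fun h => hCB (hginj h),
        by rw [hangg, hang]⟩
  · -- injectivity of the family of ray pairs
    have hU : ‖u‖ ≠ 0 := norm_ne_zero_iff.mpr hu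
    have hV : ‖v‖ ≠ 0 := norm_ne_zero_iff.mpr hv
    set Φ : E × E → E × E := fun z => (g z.1, (‖u‖ / ‖v‖) • fmap u v z.2) with hΦ_def
    have hrayg : ∀ X Y : E, rayOf (g X) (g Y) = Φ (rayOf X Y) := by
      intro X Y
      show (g X, ‖g Y - g X‖⁻¹ • (g Y - g X)) =
        (g X, (‖u‖ / ‖v‖) • fmap u v (‖Y - X‖⁻¹ • (Y - X)))
      refine Prod.ext_iff.mpr ⟨rfl, ?_⟩
      show ‖g Y - g X‖⁻¹ • (g Y - g X) = _
      rw [hgsub, norm_fmap hu hv, fmap_smul, smul_smul, mul_inv, inv_div]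
    have hΦinj : Function.Injective Φ := by
      intro z w h
      have h1 : g z.1 = g w.1 := congrArg Prod.fst h
      have h2 : (‖u‖ / ‖v‖) • fmap u v z.2 = (‖u‖ / ‖v‖) • fmap u v w.2 :=
        congrArg Prod.snd h
      exact Prod.ext (hginj h1)
        (fmap_injective hu hv (smul_right_injective _ (div_ne_zero hU hV) h2))
    have cross : ∀ (a : Fin n) (b : Fin n'),
        ({rayOf (B a) (A a), rayOf (B a) (C a)} : Set (E × E)) ≠
        {rayOf (g (B' b)) (g (A' b)), rayOf (g (B' b)) (g (C' b))} := by
      intro a b hij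
      obtain ⟨hA, hB, hC, hAB, hCB, hang⟩ := hABC a
      obtain ⟨hA', hB', hC', hA'B', hC'B', hang'⟩ := hABC' b
      have hmem1 : rayOf (B a) (A a) ∈
          ({rayOf (g (B' b)) (g (A' b)), rayOf (g (B' b)) (g (C' b))} : Set (E × E)) := by
        rw [← hij]; exact Set.mem_insert _ _
      have hmem2 : rayOf (B a) (C a) ∈
          ({rayOf (g (B' b)) (g (A' b)), rayOf (g (B' b)) (g (C' b))} : Set (E × E)) := by
        rw [← hij]; exact Set.mem_insert_iff.mpr (Or.inr rfl)
      have hBa : B a = g (B' b) := by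
        rcases Set.mem_insert_iff.mp hmem1 with h | h
        · exact congrArg Prod.fst h
        · exact congrArg Prod.fst (Set.mem_singleton_iff.mp h)
      have hB0 : ⟪B a - p₁, rot v⟫ = 0 := by
        refine le_antisymm (hPside _ (Finset.mem_coe.mp hB)) ?_
        rw [hBa]
        exact hQside' _ (Finset.mem_coe.mp hB')
      have hdir : ∀ Y : E, Y ∈ (↑P : Set E) → Y ≠ B a →
          rayOf (B a) Y ∈
            ({rayOf (g (B' b)) (g (A' b)), rayOf (g (B' b)) (g (C' b))} : Set (E × E)) →
          ⟪Y - B a, rot v⟫ = 0 := by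
        intro Y hYP hYB hYmem
        have hYle : ⟪Y - B a, rot v⟫ ≤ 0 := by
          have h1 : Y - B a = (Y - p₁) - (B a - p₁) := by abel
          rw [h1, inner_sub_left, hB0, sub_zero]
          exact hPside _ (Finset.mem_coe.mp hYP)
        have hpos : (0:ℝ) < ‖Y - B a‖⁻¹ := by
          rw [inv_pos, norm_pos_iff]
          exact sub_ne_zero.mpr hYB
        have hge : (0:ℝ) ≤ ⟪(rayOf (B a) Y).2, rot v⟫ := by
          have haux : ∀ Z : E, Z ∈ (↑Q : Set E) →
              (0:ℝ) ≤ ⟪‖g Z - g (B' b)‖⁻¹ • (g Z - g (B' b)), rot v⟫ := by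
            intro Z hZ
            rw [real_inner_smul_left]
            have h1 : g Z - g (B' b) = (g Z - p₁) - (g (B' b) - p₁) := by abel
            have h2 : ⟪g (B' b) - p₁, rot v⟫ = 0 := by rw [← hBa]; exact hB0
            have h3 : (0:ℝ) ≤ ⟪g Z - g (B' b), rot v⟫ := by
              rw [h1, inner_sub_left, h2, sub_zero]
              exact hQside' _ (Finset.mem_coe.mp hZ)
            exact mul_nonneg (inv_nonneg.mpr (norm_nonneg _)) h3
          rcases Set.mem_insert_iff.mp hYmem with h | h
          · rw [h]; exact haux _ hA'
          · rw [Set.mem_singleton_iff.mp h]; exact haux _ hC'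
        have heq : ⟪(rayOf (B a) Y).2, rot v⟫ = ‖Y - B a‖⁻¹ * ⟪Y - B a, rot v⟫ := by
          show ⟪‖Y - B a‖⁻¹ • (Y - B a), rot v⟫ = _
          rw [real_inner_smul_left]
        nlinarith
      have hdA := hdir (A a) hA hAB hmem1
      have hdC := hdir (C a) hC hCB hmem2
      obtain ⟨s, hs⟩ := ortho_rot hv hdA
      obtain ⟨s', hs'⟩ := ortho_rot hv hdC
      have hsne : s ≠ 0 := by
        intro h
        rw [h, zero_smul] at hs
        exact hAB (sub_eq_zero.mp hs)
      have hs'ne : s' ≠ 0 := by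
        intro h
        rw [h, zero_smul] at hs'
        exact hCB (sub_eq_zero.mp hs')
      have hkey : A a - B a = (s / s') • (C a - B a) := by
        rw [hs, hs', smul_smul, div_mul_cancel₀ _ hs'ne]
      have hangle : θ a = InnerProductGeometry.angle (A a - B a) (C a - B a) := by
        rw [← hang]
        unfold EuclideanGeometry.angle
        rw [vsub_eq_sub, vsub_eq_sub]
      have hCBne : C a - B a ≠ 0 := sub_ne_zero.mpr hCB
      rcases (div_ne_zero hsne hs'ne).lt_or_gt with hneg | hposs
      · have hpi : θ a = Real.pi := by
          rw [hangle, hkey, InnerProductGeometry.angle_smul_left_of_neg _ _ hneg,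
            InnerProductGeometry.angle_neg_left,
            InnerProductGeometry.angle_self hCBne, sub_zero]
        exact absurd hpi (ne_of_lt (hθ a).2)
      · have hzero : θ a = 0 := by
          rw [hangle, hkey, InnerProductGeometry.angle_smul_left_of_pos _ _ hposs,
            InnerProductGeometry.angle_self hCBne]
        exact absurd hzero (ne_of_gt (hθ a).1)
    intro i j hij
    have hdec : ∀ k : Fin (n + n'),
        (∃ a, k = Fin.castAdd n' a) ∨ (∃ b, k = Fin.natAdd n b) :=
      fun k => Fin.addCases (fun a => Or.inl ⟨a, rfl⟩) (fun b => Or.inr ⟨b, rfl⟩) k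
    rcases hdec i with ⟨a, rfl⟩ | ⟨a, rfl⟩ <;> rcases hdec j with ⟨b, rfl⟩ | ⟨b, rfl⟩ <;>
      simp only [Fin.append_left, Fin.append_right, Function.comp_apply] at hij
    · exact congrArg _ (hinjθ hij)
    · exact absurd hij (cross a b)
    · exact absurd hij.symm (cross b a)
    · have h1 : Φ '' {rayOf (B' a) (A' a), rayOf (B' a) (C' a)} =
          Φ '' {rayOf (B' b) (A' b), rayOf (B' b) (C' b)} := by
        rw [Set.image_pair, Set.image_pair]
        simp only [← hrayg]
        exact hij
      exact congrArg _ (hinjφ (Set.image_injective.mpr hΦinj h1))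

end MainProof
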